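/- Let X be an n×n real symmetric positive definite matrix and let K be a diagonal matrix whose entries k_i satisfy 0 < k_i < 2 / λ_max(X) for all i, where λ_max(X) is the largest eigenvalue of X. Then the spectral radius of I - X K is strictly less than 1. -/

import Mathlib

open Matrix
open scoped ComplexOrder Pointwise

lemma reDotAux {n : ℕ} (M : Matrix (Fin n) (Fin n) ℝ) (x : Fin n → ℂ) :
    (dotProduct (star x) ((M.map Complex.ofReal) *ᵥ x)).re
      = dotProduct (fun i => (x i).re) (M *ᵥ fun i => (x i).re)
        + dotProduct (fun i => (x i).im) (M *ᵥ fun i => (x i).im) := by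
  simp only [dotProduct, mulVec, map_apply, Finset.mul_sum, Complex.re_sum,
    ← Finset.sum_add_distrib]
  refine Finset.sum_congr rfl fun i _ => Finset.sum_congr rfl fun j _ => ?_
  simp [Complex.mul_re, Complex.mul_im]

lemma imDotAux {n : ℕ} (A : Matrix (Fin n) (Fin n) ℂ) (hA : A.IsHermitian) (x : Fin n → ℂ) :
    (dotProduct (star x) (A *ᵥ x)).im = 0 := by
  rw [← Complex.conj_eq_iff_im]
  calc (starRingEnd ℂ) (dotProduct (star x) (A *ᵥ x))
      = star (dotProduct (star x) (A *ᵥ x)) := rfl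
    _ = dotProduct (star (A *ᵥ x)) x := (star_dotProduct _ _).symm
    _ = dotProduct (star x ᵥ* Aᴴ) x := by rw [star_mulVec]
    _ = dotProduct (star x) (Aᴴ *ᵥ x) := (dotProduct_mulVec _ _ _).symm
    _ = dotProduct (star x) (A *ᵥ x) := by rw [hA.eq]

lemma isHermitian_map_ofReal {n : ℕ} {M : Matrix (Fin n) (Fin n) ℝ} (h : M.IsHermitian) :
    (M.map Complex.ofReal).IsHermitian :=
  h.map Complex.ofReal fun a => by simp [Complex.conj_ofReal]

lemma posSemidef_map_ofReal {n : ℕ} {M : Matrix (Fin n) (Fin n) ℝ} (h : M.PosSemidef) :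
    (M.map Complex.ofReal).PosSemidef := by
  refine PosSemidef.of_dotProduct_mulVec_nonneg (isHermitian_map_ofReal h.1) fun x => ?_
  rw [Complex.le_def]
  refine ⟨?_, (imDotAux _ (isHermitian_map_ofReal h.1) x).symm⟩
  rw [Complex.zero_re, reDotAux]
  have h1 := h.dotProduct_mulVec_nonneg (fun i => (x i).re)
  have h2 := h.dotProduct_mulVec_nonneg (fun i => (x i).im)
  simp only [star_trivial] at h1 h2
  positivity

lemma posDef_map_ofReal {n : ℕ} {M : Matrix (Fin n) (Fin n) ℝ} (h : M.PosDef) :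
    (M.map Complex.ofReal).PosDef := by
  refine PosDef.of_dotProduct_mulVec_pos (isHermitian_map_ofReal h.1) fun x hx => ?_
  rw [Complex.lt_def]
  refine ⟨?_, (imDotAux _ (isHermitian_map_ofReal h.1) x).symm⟩
  rw [Complex.zero_re, reDotAux]
  have hre : (fun i => (x i).re) ≠ 0 ∨ (fun i => (x i).im) ≠ 0 := by
    by_contra hc
    push_neg at hc
    apply hx
    funext i
    have h1 := congrFun hc.1 i
    have h2 := congrFun hc.2 i
    simp only [Pi.zero_apply] at h1 h2
    exact Complex.ext h1 h2
  rcases hre with ha | hb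
  · have h1 := h.dotProduct_mulVec_pos ha
    have h2 := h.posSemidef.dotProduct_mulVec_nonneg (fun i => (x i).im)
    simp only [star_trivial] at h1 h2
    linarith
  · have h1 := h.posSemidef.dotProduct_mulVec_nonneg (fun i => (x i).re)
    have h2 := h.dotProduct_mulVec_pos hb
    simp only [star_trivial] at h1 h2
    linarith

lemma posDef_conj_aux {n : ℕ} {R : Type*} [CommRing R] [PartialOrder R] [StarRing R]
    {A B : Matrix (Fin n) (Fin n) R} (hA : A.PosDef) (hB : ∀ x, B *ᵥ x = 0 → x = 0) :
    (Bᴴ * A * B).PosDef := by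
  refine PosDef.of_dotProduct_mulVec_pos (isHermitian_conjTranspose_mul_mul B hA.1) fun x hx => ?_
  have hBx : B *ᵥ x ≠ 0 := fun h => hx (hB x h)
  simpa only [star_mulVec, dotProduct_mulVec, vecMul_vecMul] using hA.dotProduct_mulVec_pos hBx

lemma spectrum_real_pos_of_posDef {n : ℕ} {B : Matrix (Fin n) (Fin n) ℂ} (hB : B.PosDef)
    {s : ℝ} (hs : s ∈ spectrum ℝ B) : 0 < s := by
  rw [hB.1.spectrum_real_eq_range_eigenvalues] at hs
  obtain ⟨i, rfl⟩ := hs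
  exact hB.eigenvalues_pos i

/-- If `X` is symmetric positive definite with largest eigenvalue
`λ_max(X)`, and `K = diag(k)` with `0 < k i < 2 / λ_max(X)` for all `i`, then the
spectral radius of `I - X K` is strictly less than 1. -/
theorem stmt9 {n : ℕ} (X : Matrix (Fin n) (Fin n) ℝ) (hX : X.PosDef)
    (k : Fin n → ℝ)
    (hk : ∀ i, 0 < k i ∧ k i < 2 / (⨆ j, hX.1.eigenvalues j)) :
    ∀ μ ∈ spectrum ℂ ((1 - X * Matrix.diagonal k).map Complex.ofReal), ‖μ‖ < 1 := by
  intro μ hμ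
  rcases Nat.eq_zero_or_pos n with hn | hn
  · subst hn
    haveI : Subsingleton (Matrix (Fin 0) (Fin 0) ℂ) := ⟨fun a b => by ext i j; exact i.elim0⟩
    rw [spectrum.mem_iff] at hμ
    exact (hμ (isUnit_of_subsingleton _)).elim
  haveI : Nonempty (Fin n) := Fin.pos_iff_nonempty.mp hn
  set lam := ⨆ j, hX.1.eigenvalues j with hlam
  have hlam_ge : ∀ j, hX.1.eigenvalues j ≤ lam :=
    fun j => le_ciSup (Set.Finite.bddAbove (Set.finite_range _)) j
  have hlam_pos : 0 < lam :=
    lt_of_lt_of_le (hX.eigenvalues_pos (Classical.arbitrary _)) (hlam_ge _)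
  have hk2 : ∀ i, lam * k i < 2 := fun i => by
    have h := (hk i).2
    rw [lt_div_iff₀ hlam_pos] at h
    linarith
  -- `lam • 1 - X` is positive semidefinite
  have halg : Matrix.diagonal (fun _ : Fin n => lam)
      = algebraMap ℝ (Matrix (Fin n) (Fin n) ℝ) lam := by
    rw [algebraMap_eq_diagonal]; rfl
  have hDh : (Matrix.diagonal (fun _ : Fin n => lam) - X).IsHermitian :=
    (isHermitian_diagonal _).sub hX.1
  have hXsub : (Matrix.diagonal (fun _ : Fin n => lam) - X).PosSemidef := by
    apply hDh.posSemidef_iff_eigenvalues_nonneg.mpr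
    intro i
    have hmem := hDh.eigenvalues_mem_spectrum_real i
    have hspecD : spectrum ℝ (Matrix.diagonal (fun _ : Fin n => lam) - X)
        = ({lam} : Set ℝ) - spectrum ℝ X := by
      rw [halg, ← spectrum.singleton_sub_eq]
    rw [hspecD] at hmem
    rcases Set.mem_sub.mp hmem with ⟨a, ha, b, hb, hab⟩
    rw [Set.mem_singleton_iff] at ha
    rw [hX.1.spectrum_real_eq_range_eigenvalues] at hb
    obtain ⟨j, rfl⟩ := hb
    have := hlam_ge j
    rw [← hab, ha, Pi.zero_apply]
    linarith
  -- Rayleigh quotient bound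
  have hRay : ∀ z : Fin n → ℝ, dotProduct z (X *ᵥ z) ≤ lam * dotProduct z z := by
    intro z
    have h0 := hXsub.dotProduct_mulVec_nonneg z
    simp only [star_trivial, sub_mulVec, dotProduct_sub] at h0
    have hd : dotProduct z (Matrix.diagonal (fun _ : Fin n => lam) *ᵥ z)
        = lam * dotProduct z z := by
      simp only [dotProduct, mulVec_diagonal, Finset.mul_sum]
      exact Finset.sum_congr rfl fun i _ => by ring
    linarith
  -- the real matrices S, M, T
  set S : Matrix (Fin n) (Fin n) ℝ := Matrix.diagonal (fun i => Real.sqrt (k i)) with hS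
  have hSH : Sᴴ = S := by
    simp [hS, diagonal_conjTranspose]
  have hSinj : ∀ x : Fin n → ℝ, S *ᵥ x = 0 → x = 0 := by
    intro x hx
    funext i
    have h := congrFun hx i
    rw [hS, mulVec_diagonal] at h
    have hs : Real.sqrt (k i) ≠ 0 := (Real.sqrt_pos.mpr (hk i).1).ne'
    simpa [hs] using h
  set M : Matrix (Fin n) (Fin n) ℝ := Sᴴ * X * S with hM
  have hMpd : M.PosDef := posDef_conj_aux hX hSinj
  have hMvec : ∀ z : Fin n → ℝ, dotProduct z (M *ᵥ z)
      = dotProduct (S *ᵥ z) (X *ᵥ (S *ᵥ z)) := by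
    intro z
    calc dotProduct z (M *ᵥ z) = dotProduct (star z) ((Sᴴ * X * S) *ᵥ z) := by
          rw [star_trivial, hM]
      _ = dotProduct (star (S *ᵥ z)) (X *ᵥ (S *ᵥ z)) := by
          simp only [star_mulVec, dotProduct_mulVec, vecMul_vecMul]
      _ = dotProduct (S *ᵥ z) (X *ᵥ (S *ᵥ z)) := by rw [star_trivial]
  have hSnorm : ∀ z : Fin n → ℝ, dotProduct (S *ᵥ z) (S *ᵥ z)
      = ∑ i, k i * (z i * z i) := by
    intro z
    simp only [dotProduct, hS, mulVec_diagonal]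
    refine Finset.sum_congr rfl fun i _ => ?_
    rw [← mul_assoc, mul_comm (Real.sqrt (k i)) (z i), mul_assoc (z i),
      Real.mul_self_sqrt (hk i).1.le]
    ring
  -- T = 2•I - M is positive definite
  have hT : (Matrix.diagonal (fun _ : Fin n => (2:ℝ)) - M).PosDef := by
    refine PosDef.of_dotProduct_mulVec_pos ((isHermitian_diagonal _).sub hMpd.1) fun z hz => ?_
    rw [star_trivial, sub_mulVec, dotProduct_sub]
    have hd : dotProduct z (Matrix.diagonal (fun _ : Fin n => (2:ℝ)) *ᵥ z)
        = ∑ i, 2 * (z i * z i) := by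
      simp only [dotProduct, mulVec_diagonal]
      exact Finset.sum_congr rfl fun i _ => by ring
    have h1 : dotProduct z (M *ᵥ z) ≤ lam * ∑ i, k i * (z i * z i) := by
      rw [hMvec z, ← hSnorm z]
      exact hRay _
    have h2 : lam * ∑ i, k i * (z i * z i) = ∑ i, (lam * k i) * (z i * z i) := by
      rw [Finset.mul_sum]
      exact Finset.sum_congr rfl fun i _ => by ring
    have h3 : ∑ i, (lam * k i) * (z i * z i) < ∑ i, 2 * (z i * z i) := by
      obtain ⟨i0, hi0⟩ := Function.ne_iff.mp hz
      have hi0' : z i0 ≠ 0 := by simpa using hi0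
      refine Finset.sum_lt_sum (fun i _ => ?_) ⟨i0, Finset.mem_univ _, ?_⟩
      · exact mul_le_mul_of_nonneg_right (hk2 i).le (mul_self_nonneg _)
      · exact mul_lt_mul_of_pos_right (hk2 i0) (mul_self_pos.mpr hi0')
    rw [hd]
    linarith
  -- complex versions
  have hMcpd := posDef_map_ofReal hMpd
  have hTcpd := posDef_map_ofReal hT
  have hmap_sub : ∀ (A B : Matrix (Fin n) (Fin n) ℝ),
      (A - B).map Complex.ofReal = A.map Complex.ofReal - B.map Complex.ofReal :=
    fun A B => Matrix.map_sub Complex.ofReal (fun a b => Complex.ofReal_sub a b) A B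
  have hmap_mul : ∀ (A B : Matrix (Fin n) (Fin n) ℝ),
      (A * B).map Complex.ofReal = A.map Complex.ofReal * B.map Complex.ofReal :=
    fun A B => Matrix.map_mul (f := Complex.ofRealHom)
  have hmap_one : (1 : Matrix (Fin n) (Fin n) ℝ).map Complex.ofReal = 1 :=
    Matrix.map_one _ Complex.ofReal_zero Complex.ofReal_one
  have hmap_diag : ∀ d : Fin n → ℝ,
      (Matrix.diagonal d).map Complex.ofReal = Matrix.diagonal (fun i => (d i : ℂ)) :=
    fun d => Matrix.diagonal_map Complex.ofReal_zero
  set Sc : Matrix (Fin n) (Fin n) ℂ := S.map Complex.ofReal with hSc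
  have hScdiag : Sc = Matrix.diagonal (fun i => (Real.sqrt (k i) : ℂ)) := by
    rw [hSc, hS, hmap_diag]
  set Si : Matrix (Fin n) (Fin n) ℂ :=
    Matrix.diagonal (fun i => ((Real.sqrt (k i) : ℂ))⁻¹) with hSi
  have hsqrt_ne : ∀ i, (Real.sqrt (k i) : ℂ) ≠ 0 := fun i =>
    Complex.ofReal_ne_zero.mpr (Real.sqrt_pos.mpr (hk i).1).ne'
  have hScSi : Sc * Si = 1 := by
    have hfun : (fun i => (Real.sqrt (k i) : ℂ) * ((Real.sqrt (k i) : ℂ))⁻¹)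
        = fun _ : Fin n => (1:ℂ) := funext fun i => mul_inv_cancel₀ (hsqrt_ne i)
    rw [hScdiag, hSi, diagonal_mul_diagonal, hfun, diagonal_one]
  have hSiSc : Si * Sc = 1 := by
    have hfun : (fun i => ((Real.sqrt (k i) : ℂ))⁻¹ * (Real.sqrt (k i) : ℂ))
        = fun _ : Fin n => (1:ℂ) := funext fun i => inv_mul_cancel₀ (hsqrt_ne i)
    rw [hSi, hScdiag, diagonal_mul_diagonal, hfun, diagonal_one]
  set u : (Matrix (Fin n) (Fin n) ℂ)ˣ := ⟨Sc, Si, hScSi, hSiSc⟩ with hu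
  set Xc : Matrix (Fin n) (Fin n) ℂ := X.map Complex.ofReal with hXc
  set Mc : Matrix (Fin n) (Fin n) ℂ := M.map Complex.ofReal with hMc
  have hMcEq : Mc = Sc * Xc * Sc := by
    rw [hMc, hM, hSH, hmap_mul, hmap_mul]
  have hScSc : Sc * Sc = (Matrix.diagonal k).map Complex.ofReal := by
    have hfun : (fun i => (Real.sqrt (k i) : ℂ) * (Real.sqrt (k i) : ℂ))
        = fun i => ((k i : ℝ) : ℂ) := funext fun i => by
      rw [← Complex.ofReal_mul, Real.mul_self_sqrt (hk i).1.le]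
    rw [hScdiag, diagonal_mul_diagonal, hfun, hmap_diag]
  have hA : (1 - X * Matrix.diagonal k).map Complex.ofReal
      = (↑u⁻¹ : Matrix (Fin n) (Fin n) ℂ) * (1 - Mc) * (↑u : Matrix (Fin n) (Fin n) ℂ) := by
    have hcoe : (↑u⁻¹ : Matrix (Fin n) (Fin n) ℂ) = Si := rfl
    have hcoe2 : (↑u : Matrix (Fin n) (Fin n) ℂ) = Sc := rfl
    rw [hcoe, hcoe2, hmap_sub, hmap_one, hmap_mul, hMcEq]
    rw [Matrix.mul_sub, Matrix.sub_mul, Matrix.mul_one, hSiSc]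
    have hkey : Si * (Sc * Xc * Sc) * Sc = Xc * ((Matrix.diagonal k).map Complex.ofReal) := by
      calc Si * (Sc * Xc * Sc) * Sc = Si * Sc * (Xc * (Sc * Sc)) := by
            simp only [Matrix.mul_assoc]
        _ = Xc * (Sc * Sc) := by rw [hSiSc, Matrix.one_mul]
        _ = Xc * ((Matrix.diagonal k).map Complex.ofReal) := by rw [hScSc]
    congr 1
    exact hkey.symm
  rw [hA, spectrum.units_conjugate'] at hμ
  -- spectrum of 1 - Mc
  have h1M : (1 - Mc).IsHermitian := (isHermitian_one).sub hMcpd.1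
  have hspec : spectrum ℂ (1 - Mc) = Set.range (RCLike.ofReal ∘ h1M.eigenvalues) := by
    rw [h1M.spectrum_eq_image_range, ← Set.range_comp]
  rw [hspec] at hμ
  obtain ⟨i, hi⟩ := hμ
  have hr : h1M.eigenvalues i ∈ spectrum ℝ (1 - Mc) := h1M.eigenvalues_mem_spectrum_real i
  have hshift : spectrum ℝ ((1 : Matrix (Fin n) (Fin n) ℂ) - Mc)
      = ({(1:ℝ)} : Set ℝ) - spectrum ℝ Mc := by
    rw [show (1 : Matrix (Fin n) (Fin n) ℂ) - Mc
        = algebraMap ℝ (Matrix (Fin n) (Fin n) ℂ) 1 - Mc from by rw [_root_.map_one],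
      ← spectrum.singleton_sub_eq]
  rw [hshift] at hr
  rcases Set.mem_sub.mp hr with ⟨a, ha, s, hs, hab⟩
  rw [Set.mem_singleton_iff] at ha
  have hs_pos : 0 < s := spectrum_real_pos_of_posDef hMcpd hs
  have hs_lt : s < 2 := by
    have h2mem : (2:ℝ) - s ∈ ({(2:ℝ)} : Set ℝ) - spectrum ℝ Mc := Set.sub_mem_sub rfl hs
    rw [spectrum.singleton_sub_eq] at h2mem
    have halg2 : algebraMap ℝ (Matrix (Fin n) (Fin n) ℂ) 2 - Mc
        = (Matrix.diagonal (fun _ : Fin n => (2:ℝ)) - M).map Complex.ofReal := by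
      rw [hmap_sub, hmap_diag, ← hMc, algebraMap_eq_diagonal]
      congr 1
    rw [halg2] at h2mem
    have := spectrum_real_pos_of_posDef hTcpd h2mem
    linarith
  rw [← hi]
  have : (RCLike.ofReal ∘ h1M.eigenvalues) i = ((h1M.eigenvalues i : ℝ) : ℂ) := rfl
  rw [this, Complex.norm_real, Real.norm_eq_abs, ← hab, ha, abs_lt]
  constructor <;> linarith
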